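/- For any elementary existential doctrine P, the canonical functor L : Q_P → E_P from the elementary quotient completion to the equivalence-relation part of the exact completion is well-defined (L[f] is independent of the representative f and is an arrow of E_P, L preserves identities and composition) and faithful. -/

import Mathlib

open CategoryTheory CategoryTheory.Limits

universe u v w

/-- Layer 0: an indexed family of inf-semilattices over a category. -/
structure DocL0 (C : Type u) [Category.{v} C] where
  obj : C → Type w
  semi : ∀ A : C, SemilatticeInf (obj A)

attribute [instance] DocL0.semi

/-- Layer 1: fibrewise top elements. -/
structure DocL1 (C : Type u) [Category.{v} C] extends DocL0.{u, v, w} C where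
  otop : ∀ A : C, OrderTop (obj A)

attribute [instance] DocL1.otop

/-- A doctrine: an indexed inf-semilattice `P : Cᵒᵖ → InfSL`. -/
structure Doctrine (C : Type u) [Category.{v} C] extends DocL1.{u, v, w} C where
  map : ∀ {A B : C}, (A ⟶ B) → obj B → obj A
  map_id : ∀ (A : C) (x : obj A), map (𝟙 A) x = x
  map_comp : ∀ {A B D : C} (f : A ⟶ B) (g : B ⟶ D) (x : obj D),
    map (f ≫ g) x = map f (map g x)
  map_mono : ∀ {A B : C} (f : A ⟶ B), Monotone (map f)
  map_inf : ∀ {A B : C} (f : A ⟶ B) (x y : obj B),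
    map f (x ⊓ y) = map f x ⊓ map f y
  map_top : ∀ {A B : C} (f : A ⟶ B), map f (⊤ : obj B) = (⊤ : obj A)

/-- An elementary existential doctrine. -/
structure EED (C : Type u) [Category.{v} C] [HasBinaryProducts C] extends
    Doctrine.{u, v, w} C where
  delta : ∀ A : C, obj (A ⨯ A)
  elem_i : ∀ {A : C} (α : obj A) (β : obj (A ⨯ A)),
    map prod.fst α ⊓ delta A ≤ β ↔ α ≤ map (diag A) β
  elem_ii : ∀ {X A : C} (α : obj (X ⨯ A)) (β : obj ((X ⨯ A) ⨯ A)),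
    map prod.fst α ⊓ map (prod.lift (prod.fst ≫ prod.snd) prod.snd) (delta A) ≤ β ↔
      α ≤ map (prod.lift (𝟙 (X ⨯ A)) prod.snd) β
  ex : ∀ {A B : C}, (A ⟶ B) → obj A → obj B
  ex_adj : ∀ {A B : C} (f : A ⟶ B) (α : obj A) (β : obj B),
    ex f α ≤ β ↔ α ≤ map f β
  frobenius : ∀ {A B : C} (f : A ⟶ B) (α : obj B) (β : obj A),
    ex f (map f α ⊓ β) = α ⊓ ex f β
  beck_chevalley : ∀ {A A' B : C} (f : A' ⟶ A) (β : obj (A ⨯ B)),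
    ex prod.fst (map (prod.map f (𝟙 B)) β) = map f (ex prod.fst β)

namespace EED

variable {C : Type u} [Category.{v} C] [HasBinaryProducts C] (P : EED.{u, v, w} C)

/-- Relational composition `∃_{p₂}(P_{⟨p₁,p₂⟩}(θ) ∧ P_{⟨p₂,p₃⟩}(ζ))`. -/
noncomputable def comp {A B D : C} (θ : P.obj (A ⨯ B)) (ζ : P.obj (B ⨯ D)) : P.obj (A ⨯ D) :=
  P.ex (prod.lift (prod.fst ≫ prod.fst) prod.snd)
    (P.map prod.fst θ ⊓ P.map (prod.lift (prod.fst ≫ prod.snd) prod.snd) ζ)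

/-- Opposite relation `P_{⟨p₂,p₁⟩}(θ)`. -/
noncomputable def op {A B : C} (θ : P.obj (A ⨯ B)) : P.obj (B ⨯ A) :=
  P.map (prod.lift prod.snd prod.fst) θ

/-- `ρ ≤ P_{⟨p₂,p₁⟩}(ρ)`. -/
def SymmRel {A : C} (ρ : P.obj (A ⨯ A)) : Prop :=
  ρ ≤ P.map (prod.lift prod.snd prod.fst) ρ

/-- `P_{⟨p₁,p₂⟩}(ρ) ∧ P_{⟨p₂,p₃⟩}(ρ) ≤ P_{⟨p₁,p₃⟩}(ρ)` in `P((A×A)×A)`. -/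
def TransRel {A : C} (ρ : P.obj (A ⨯ A)) : Prop :=
  P.map prod.fst ρ ⊓ P.map (prod.lift (prod.fst ≫ prod.snd) prod.snd) ρ ≤
    P.map (prod.lift (prod.fst ≫ prod.fst) prod.snd) ρ

/-- `δ_A ≤ ρ`. -/
def ReflRel {A : C} (ρ : P.obj (A ⨯ A)) : Prop := P.delta A ≤ ρ

/-- A `P`-equivalence relation. -/
def EqRel {A : C} (ρ : P.obj (A ⨯ A)) : Prop :=
  P.ReflRel ρ ∧ P.SymmRel ρ ∧ P.TransRel ρ

/-- Conditions (i)–(v) for an arrow `φ : ⟨A,ρ⟩ → ⟨B,σ⟩` of the exact completion `T_P`. -/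
def IsArrow {A B : C} (ρ : P.obj (A ⨯ A)) (σ : P.obj (B ⨯ B)) (φ : P.obj (A ⨯ B)) : Prop :=
  (φ ≤ P.map (prod.lift prod.fst prod.fst) ρ ⊓ P.map (prod.lift prod.snd prod.snd) σ) ∧
  (P.map prod.fst ρ ⊓ P.map (prod.lift (prod.fst ≫ prod.snd) prod.snd) φ ≤
      P.map (prod.lift (prod.fst ≫ prod.fst) prod.snd) φ) ∧
  (P.map prod.fst φ ⊓ P.map (prod.lift (prod.fst ≫ prod.snd) prod.snd) σ ≤
      P.map (prod.lift (prod.fst ≫ prod.fst) prod.snd) φ) ∧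
  (P.map prod.fst φ ⊓ P.map (prod.lift (prod.fst ≫ prod.fst) prod.snd) φ ≤
      P.map (prod.lift (prod.fst ≫ prod.snd) prod.snd) σ) ∧
  (P.map (diag A) ρ ≤ P.ex prod.fst φ)

/-- The graph relation `L[f] = ∃_{p₂}(P_{⟨p₁,p₂⟩}(ρ) ∧ P_{⟨f∘p₂,p₃⟩}(σ))` in `P(A×B)`. -/
noncomputable def Lrel {A B : C} (f : A ⟶ B) (ρ : P.obj (A ⨯ A)) (σ : P.obj (B ⨯ B)) : P.obj (A ⨯ B) :=
  P.ex (prod.lift (prod.fst ≫ prod.fst) prod.snd)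
    (P.map prod.fst ρ ⊓ P.map (prod.lift (prod.fst ≫ prod.snd ≫ f) prod.snd) σ)

end EED

namespace EED

variable {C : Type u} [Category.{v} C] [HasBinaryProducts C] (P : EED.{u, v, w} C)

lemma map_map {A B D : C} (u : A ⟶ B) (v : B ⟶ D) (x : P.obj D) :
    P.map u (P.map v x) = P.map (u ≫ v) x := (P.map_comp u v x).symm

lemma le_map_ex {A B : C} (f : A ⟶ B) (α : P.obj A) : α ≤ P.map f (P.ex f α) :=
  (P.ex_adj f α _).1 le_rfl

lemma ex_mono {A B : C} (f : A ⟶ B) : Monotone (P.ex f) := fun x y h =>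
  (P.ex_adj f x _).2 (h.trans (P.le_map_ex f y))

lemma ex_id {A : C} (α : P.obj A) : P.ex (𝟙 A) α = α := by
  apply le_antisymm
  · exact (P.ex_adj _ _ _).2 (by rw [P.map_id])
  · have h := P.le_map_ex (𝟙 A) α
    rwa [P.map_id] at h

lemma ex_comp {A B D : C} (u : A ⟶ B) (v : B ⟶ D) (α : P.obj A) :
    P.ex (u ≫ v) α = P.ex v (P.ex u α) := by
  apply le_antisymm
  · exact (P.ex_adj _ _ _).2 (by
      rw [P.map_comp]
      exact (P.le_map_ex u α).trans (P.map_mono u (P.le_map_ex v _)))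
  · exact (P.ex_adj _ _ _).2 ((P.ex_adj _ _ _).2 (by
      rw [← P.map_comp]; exact P.le_map_ex _ _))

lemma le_ex_of_section {X Y : C} (d : Y ⟶ X) (e : X ⟶ Y) (hde : d ≫ e = 𝟙 Y)
    (x : P.obj X) (y : P.obj Y) (h : y ≤ P.map d x) : y ≤ P.ex e x := by
  have h1 : P.ex d y ≤ x := (P.ex_adj _ _ _).2 h
  calc y = P.ex (d ≫ e) y := by rw [hde, P.ex_id]
    _ = P.ex e (P.ex d y) := P.ex_comp ..
    _ ≤ P.ex e x := P.ex_mono e h1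

lemma diag_delta_top (X : C) : P.map (diag X) (P.delta X) = ⊤ :=
  top_le_iff.mp ((P.elem_i ⊤ (P.delta X)).1 inf_le_right)

lemma diag_top {A : C} {ρ : P.obj (A ⨯ A)} (h : P.ReflRel ρ) : P.map (diag A) ρ = ⊤ :=
  top_le_iff.mp (by rw [← P.diag_delta_top A]; exact P.map_mono _ h)

lemma refl_pull {A X : C} {ρ : P.obj (A ⨯ A)} (h : P.ReflRel ρ) (a : X ⟶ A) :
    P.map (prod.lift a a) ρ = ⊤ := by
  have e : prod.lift a a = a ≫ diag A := by apply Limits.prod.hom_ext <;> simp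
  rw [e, P.map_comp, P.diag_top h, P.map_top]

lemma symm_pull {A X : C} {ρ : P.obj (A ⨯ A)} (h : P.SymmRel ρ) (a b : X ⟶ A) :
    P.map (prod.lift a b) ρ ≤ P.map (prod.lift b a) ρ := by
  have e : prod.lift a b ≫ prod.lift prod.snd prod.fst = prod.lift b a := by
    apply Limits.prod.hom_ext <;> simp [prod.lift_fst, prod.lift_snd]
  calc P.map (prod.lift a b) ρ
      ≤ P.map (prod.lift a b) (P.map (prod.lift prod.snd prod.fst) ρ) := P.map_mono _ h
    _ = P.map (prod.lift b a) ρ := by rw [P.map_map, e]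

lemma trans_pull {A X : C} {ρ : P.obj (A ⨯ A)} (h : P.TransRel ρ) (a b c : X ⟶ A) :
    P.map (prod.lift a b) ρ ⊓ P.map (prod.lift b c) ρ ≤ P.map (prod.lift a c) ρ := by
  have h' := P.map_mono (prod.lift (prod.lift a b) c) h
  rw [P.map_inf, P.map_map, P.map_map, P.map_map] at h'
  have e1 : prod.lift (prod.lift a b) c ≫ prod.fst = prod.lift a b := prod.lift_fst _ _
  have e2 : prod.lift (prod.lift a b) c ≫ prod.lift (prod.fst ≫ prod.snd) prod.snd
      = prod.lift b c := by apply Limits.prod.hom_ext <;> simp [prod.lift_fst, prod.lift_snd, prod.lift_fst_assoc, prod.lift_snd_assoc]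
  have e3 : prod.lift (prod.lift a b) c ≫ prod.lift (prod.fst ≫ prod.fst) prod.snd
      = prod.lift a c := by apply Limits.prod.hom_ext <;> simp [prod.lift_fst, prod.lift_snd, prod.lift_fst_assoc, prod.lift_snd_assoc]
  rwa [e1, e2, e3] at h'

lemma ex_fst_delta_top (X : C) : P.ex (prod.fst : X ⨯ X ⟶ X) (P.delta X) = ⊤ := by
  apply top_le_iff.mp
  have h1 : P.delta X ≤ P.map prod.fst (P.ex prod.fst (P.delta X)) := P.le_map_ex _ _
  have h2 := P.map_mono (diag X) h1
  rw [P.map_map] at h2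
  have e : diag X ≫ (prod.fst : X ⨯ X ⟶ X) = 𝟙 X := by simp [prod.lift_fst]
  rw [e, P.map_id] at h2
  calc (⊤ : P.obj X) = P.map (diag X) (P.delta X) := (P.diag_delta_top X).symm
    _ ≤ _ := h2

lemma ex_fst_top {B : C} {σ : P.obj (B ⨯ B)} (h : P.ReflRel σ) :
    P.ex (prod.fst : B ⨯ B ⟶ B) σ = ⊤ :=
  top_le_iff.mp (by rw [← P.ex_fst_delta_top B]; exact P.ex_mono _ h)

lemma Lrel_eq {A B : C} (f : A ⟶ B) {ρ : P.obj (A ⨯ A)} {σ : P.obj (B ⨯ B)}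
    (hρ : P.EqRel ρ) (hσ : P.EqRel σ) (hf : ρ ≤ P.map (prod.map f f) σ) :
    P.Lrel f ρ σ = P.map (prod.map f (𝟙 B)) σ := by
  obtain ⟨hρr, _, _⟩ := hρ
  obtain ⟨hσr, _, hσt⟩ := hσ
  simp only [EED.Lrel]
  apply le_antisymm
  · apply (P.ex_adj _ _ _).2
    rw [P.map_map]
    have e2 : prod.lift (prod.fst ≫ prod.fst) (prod.snd : (A ⨯ A) ⨯ B ⟶ B) ≫ prod.map f (𝟙 B)
        = prod.lift (prod.fst ≫ prod.fst ≫ f) prod.snd := by apply Limits.prod.hom_ext <;> simp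
    rw [e2]
    have h1 : P.map (prod.fst : (A ⨯ A) ⨯ B ⟶ A ⨯ A) ρ
        ≤ P.map (prod.lift (prod.fst ≫ prod.fst ≫ f) (prod.fst ≫ prod.snd ≫ f)) σ := by
      refine le_trans (P.map_mono _ hf) ?_
      rw [P.map_map]
      have e1 : (prod.fst : (A ⨯ A) ⨯ B ⟶ A ⨯ A) ≫ prod.map f f
          = prod.lift (prod.fst ≫ prod.fst ≫ f) (prod.fst ≫ prod.snd ≫ f) := by
        apply Limits.prod.hom_ext <;> simp [prod.lift_fst, prod.lift_snd]
      rw [e1]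
    exact le_trans (inf_le_inf h1 le_rfl) (P.trans_pull hσt _ _ _)
  · refine P.le_ex_of_section (prod.lift (prod.fst ≫ diag A) prod.snd) _
      (by apply Limits.prod.hom_ext <;> simp [prod.lift_fst, prod.lift_snd, prod.lift_fst_assoc, prod.lift_snd_assoc]) _ _ ?_
    rw [P.map_inf, P.map_map, P.map_map]
    have e3 : prod.lift (prod.fst ≫ diag A) (prod.snd : A ⨯ B ⟶ B)
        ≫ (prod.fst : (A ⨯ A) ⨯ B ⟶ A ⨯ A) = prod.lift prod.fst prod.fst := by
      apply Limits.prod.hom_ext <;> simp [prod.lift_fst, prod.lift_snd]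
    have e4 : prod.lift (prod.fst ≫ diag A) (prod.snd : A ⨯ B ⟶ B)
        ≫ prod.lift (prod.fst ≫ prod.snd ≫ f) prod.snd = prod.map f (𝟙 B) := by
      apply Limits.prod.hom_ext <;> simp [prod.lift_fst, prod.lift_snd, prod.lift_fst_assoc, prod.lift_snd_assoc]
    rw [e3, e4, P.refl_pull hρr]
    exact le_inf le_top le_rfl

lemma graph_mono {A B : C} {σ : P.obj (B ⨯ B)} (hσt : P.TransRel σ) (u v : A ⟶ B)
    (h : (⊤ : P.obj A) ≤ P.map (prod.lift u v) σ) :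
    P.map (prod.map v (𝟙 B)) σ ≤ P.map (prod.map u (𝟙 B)) σ := by
  have h1 : (⊤ : P.obj (A ⨯ B)) ≤ P.map (prod.lift (prod.fst ≫ u) (prod.fst ≫ v)) σ := by
    have h2 := P.map_mono (prod.fst : A ⨯ B ⟶ A) h
    rw [P.map_top, P.map_map] at h2
    have e : (prod.fst : A ⨯ B ⟶ A) ≫ prod.lift u v
        = prod.lift (prod.fst ≫ u) (prod.fst ≫ v) := by apply Limits.prod.hom_ext <;> simp
    rwa [e] at h2
  have eu : prod.map u (𝟙 B) = prod.lift (prod.fst ≫ u) (prod.snd : A ⨯ B ⟶ B) := by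
    apply Limits.prod.hom_ext <;> simp [prod.lift_fst, prod.lift_snd]
  have ev : prod.map v (𝟙 B) = prod.lift (prod.fst ≫ v) (prod.snd : A ⨯ B ⟶ B) := by
    apply Limits.prod.hom_ext <;> simp [prod.lift_fst, prod.lift_snd]
  rw [eu, ev]
  exact le_trans (le_inf (le_trans le_top h1) le_rfl) (P.trans_pull hσt _ _ _)

end EED

/-- the canonical functor `L : Q_P → E_P` is well defined
(`L[f]` does not depend on the representative and is an arrow of `E_P`, and
`L` preserves identities and composition) and faithful. -/
theorem L_well_defined_and_faithful
    {C : Type u} [Category.{v} C] [HasBinaryProducts C] (P : EED.{u, v, w} C)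
    {A B D : C} (ρ : P.obj (A ⨯ A)) (σ : P.obj (B ⨯ B)) (τ : P.obj (D ⨯ D))
    (hρ : P.EqRel ρ) (hσ : P.EqRel σ) (hτ : P.EqRel τ)
    (f f' : A ⟶ B) (g : B ⟶ D)
    (hf : ρ ≤ P.map (prod.map f f) σ) (hf' : ρ ≤ P.map (prod.map f' f') σ)
    (hg : σ ≤ P.map (prod.map g g) τ) :
    ((ρ ≤ P.map (prod.map f f') σ) ↔ P.Lrel f ρ σ = P.Lrel f' ρ σ) ∧
    P.IsArrow ρ σ (P.Lrel f ρ σ) ∧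
    P.Lrel (𝟙 A) ρ ρ = ρ ∧
    P.Lrel (f ≫ g) ρ τ = P.comp (P.Lrel f ρ σ) (P.Lrel g σ τ) := by
  have Lf := P.Lrel_eq f hρ hσ hf
  have Lf' := P.Lrel_eq f' hρ hσ hf'
  refine ⟨⟨?_, ?_⟩, ⟨?_, ?_, ?_, ?_, ?_⟩, ?_, ?_⟩
  · -- well-definedness: f ∼ f' implies L[f] = L[f']
    intro h
    rw [Lf, Lf']
    have key : (⊤ : P.obj A) ≤ P.map (prod.lift f f') σ := by
      have h2 := P.map_mono (diag A) h
      rw [P.diag_top hρ.1, P.map_map] at h2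
      have e : diag A ≫ prod.map f f' = prod.lift f f' := by apply Limits.prod.hom_ext <;> simp
      rwa [e] at h2
    have key2 : (⊤ : P.obj A) ≤ P.map (prod.lift f' f) σ :=
      key.trans (P.symm_pull hσ.2.1 f f')
    exact le_antisymm (P.graph_mono hσ.2.2 f' f key2) (P.graph_mono hσ.2.2 f f' key)
  · -- faithfulness: L[f] = L[f'] implies f ∼ f'
    intro h
    rw [Lf, Lf'] at h
    have h2 := congrArg (P.map (prod.lift (prod.fst : A ⨯ A ⟶ A) (prod.snd ≫ f'))) h
    rw [P.map_map, P.map_map] at h2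
    have e1 : prod.lift (prod.fst : A ⨯ A ⟶ A) (prod.snd ≫ f') ≫ prod.map f (𝟙 B)
        = prod.map f f' := by apply Limits.prod.hom_ext <;> simp
    have e2 : prod.lift (prod.fst : A ⨯ A ⟶ A) (prod.snd ≫ f') ≫ prod.map f' (𝟙 B)
        = prod.map f' f' := by apply Limits.prod.hom_ext <;> simp
    rw [e1, e2] at h2
    rw [h2]
    exact hf'
  · -- IsArrow (i)
    rw [Lf, P.refl_pull hρ.1, P.refl_pull hσ.1]
    exact le_inf le_top le_top
  · -- IsArrow (ii)
    rw [Lf, P.map_map, P.map_map]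
    have e1 : prod.lift (prod.fst ≫ prod.snd) (prod.snd : (A ⨯ A) ⨯ B ⟶ B) ≫ prod.map f (𝟙 B)
        = prod.lift (prod.fst ≫ prod.snd ≫ f) prod.snd := by apply Limits.prod.hom_ext <;> simp
    have e2 : prod.lift (prod.fst ≫ prod.fst) (prod.snd : (A ⨯ A) ⨯ B ⟶ B) ≫ prod.map f (𝟙 B)
        = prod.lift (prod.fst ≫ prod.fst ≫ f) prod.snd := by apply Limits.prod.hom_ext <;> simp
    rw [e1, e2]
    have h1 : P.map (prod.fst : (A ⨯ A) ⨯ B ⟶ A ⨯ A) ρ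
        ≤ P.map (prod.lift (prod.fst ≫ prod.fst ≫ f) (prod.fst ≫ prod.snd ≫ f)) σ := by
      refine le_trans (P.map_mono _ hf) ?_
      rw [P.map_map]
      have e : (prod.fst : (A ⨯ A) ⨯ B ⟶ A ⨯ A) ≫ prod.map f f
          = prod.lift (prod.fst ≫ prod.fst ≫ f) (prod.fst ≫ prod.snd ≫ f) := by
        apply Limits.prod.hom_ext <;> simp [prod.lift_fst, prod.lift_snd]
      rw [e]
    exact le_trans (inf_le_inf h1 le_rfl) (P.trans_pull hσ.2.2 _ _ _)
  · -- IsArrow (iii)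
    rw [Lf, P.map_map, P.map_map]
    have e1 : (prod.fst : (A ⨯ B) ⨯ B ⟶ A ⨯ B) ≫ prod.map f (𝟙 B)
        = prod.lift (prod.fst ≫ prod.fst ≫ f) (prod.fst ≫ prod.snd) := by
      apply Limits.prod.hom_ext <;> simp [prod.lift_fst, prod.lift_snd]
    have e2 : prod.lift (prod.fst ≫ prod.fst) (prod.snd : (A ⨯ B) ⨯ B ⟶ B) ≫ prod.map f (𝟙 B)
        = prod.lift (prod.fst ≫ prod.fst ≫ f) prod.snd := by apply Limits.prod.hom_ext <;> simp
    rw [e1, e2]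
    exact P.trans_pull hσ.2.2 _ _ _
  · -- IsArrow (iv)
    rw [Lf, P.map_map, P.map_map]
    have e1 : (prod.fst : (A ⨯ B) ⨯ B ⟶ A ⨯ B) ≫ prod.map f (𝟙 B)
        = prod.lift (prod.fst ≫ prod.fst ≫ f) (prod.fst ≫ prod.snd) := by
      apply Limits.prod.hom_ext <;> simp [prod.lift_fst, prod.lift_snd]
    have e2 : prod.lift (prod.fst ≫ prod.fst) (prod.snd : (A ⨯ B) ⨯ B ⟶ B) ≫ prod.map f (𝟙 B)
        = prod.lift (prod.fst ≫ prod.fst ≫ f) prod.snd := by apply Limits.prod.hom_ext <;> simp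
    rw [e1, e2]
    exact le_trans (inf_le_inf (P.symm_pull hσ.2.1 _ _) le_rfl) (P.trans_pull hσ.2.2 _ _ _)
  · -- IsArrow (v)
    rw [Lf, P.beck_chevalley, P.ex_fst_top hσ.1, P.map_top]
    exact le_top
  · -- identities
    have h1 : ρ ≤ P.map (prod.map (𝟙 A) (𝟙 A)) ρ := by rw [prod.map_id_id, P.map_id]
    rw [P.Lrel_eq (𝟙 A) hρ hρ h1, prod.map_id_id, P.map_id]
  · -- composition
    have hfg : ρ ≤ P.map (prod.map (f ≫ g) (f ≫ g)) τ := by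
      refine hf.trans (le_trans (P.map_mono _ hg) ?_)
      rw [P.map_map, prod.map_map]
    rw [P.Lrel_eq (f ≫ g) hρ hτ hfg, Lf, P.Lrel_eq g hσ hτ hg]
    simp only [EED.comp]
    rw [P.map_map, P.map_map]
    have e1 : (prod.fst : (A ⨯ B) ⨯ D ⟶ A ⨯ B) ≫ prod.map f (𝟙 B)
        = prod.lift (prod.fst ≫ prod.fst ≫ f) (prod.fst ≫ prod.snd) := by
      apply Limits.prod.hom_ext <;> simp [prod.lift_fst, prod.lift_snd]
    have e2 : prod.lift (prod.fst ≫ prod.snd) (prod.snd : (A ⨯ B) ⨯ D ⟶ D) ≫ prod.map g (𝟙 D)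
        = prod.lift (prod.fst ≫ prod.snd ≫ g) prod.snd := by apply Limits.prod.hom_ext <;> simp
    rw [e1, e2]
    apply le_antisymm
    · refine P.le_ex_of_section (prod.lift (prod.lift prod.fst (prod.fst ≫ f)) prod.snd) _
        (by apply Limits.prod.hom_ext <;> simp [prod.lift_fst, prod.lift_snd, prod.lift_fst_assoc, prod.lift_snd_assoc]) _ _ ?_
      rw [P.map_inf, P.map_map, P.map_map]
      have e3 : prod.lift (prod.lift prod.fst (prod.fst ≫ f)) (prod.snd : A ⨯ D ⟶ D)
          ≫ prod.lift (prod.fst ≫ prod.fst ≫ f) (prod.fst ≫ prod.snd)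
          = prod.lift (prod.fst ≫ f) (prod.fst ≫ f) := by apply Limits.prod.hom_ext <;> simp [prod.lift_fst, prod.lift_snd, prod.lift_fst_assoc, prod.lift_snd_assoc]
      have e4 : prod.lift (prod.lift prod.fst (prod.fst ≫ f)) (prod.snd : A ⨯ D ⟶ D)
          ≫ prod.lift (prod.fst ≫ prod.snd ≫ g) prod.snd
          = prod.map (f ≫ g) (𝟙 D) := by apply Limits.prod.hom_ext <;> simp [prod.lift_fst, prod.lift_snd, prod.lift_fst_assoc, prod.lift_snd_assoc]
      rw [e3, e4, P.refl_pull hσ.1]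
      exact le_inf le_top le_rfl
    · apply (P.ex_adj _ _ _).2
      rw [P.map_map]
      have e5 : prod.lift (prod.fst ≫ prod.fst) (prod.snd : (A ⨯ B) ⨯ D ⟶ D)
          ≫ prod.map (f ≫ g) (𝟙 D)
          = prod.lift (prod.fst ≫ prod.fst ≫ f ≫ g) prod.snd := by
        apply Limits.prod.hom_ext <;> simp
      rw [e5]
      have h1 : P.map (prod.lift (prod.fst ≫ prod.fst ≫ f) (prod.fst ≫ prod.snd)
            : (A ⨯ B) ⨯ D ⟶ B ⨯ B) σ
          ≤ P.map (prod.lift (prod.fst ≫ prod.fst ≫ f ≫ g) (prod.fst ≫ prod.snd ≫ g)) τ := by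
        refine le_trans (P.map_mono _ hg) ?_
        rw [P.map_map]
        have e6 : prod.lift (prod.fst ≫ prod.fst ≫ f) (prod.fst ≫ prod.snd
              : (A ⨯ B) ⨯ D ⟶ B) ≫ prod.map g g
            = prod.lift (prod.fst ≫ prod.fst ≫ f ≫ g) (prod.fst ≫ prod.snd ≫ g) := by
          apply Limits.prod.hom_ext <;> simp
        rw [e6]
      exact le_trans (inf_le_inf h1 le_rfl) (P.trans_pull hτ.2.2 _ _ _)
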